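/- For −1/2 < s < 0, u a Schwartz function, and f(ξ) = |û(ξ)|², one has ‖u‖²_{H^s} = −(2 sin(πs)/π) ∫₁^∞ (τ²−1)^s Re T₂(iτ/2) dτ, where T₂(z) = i ∫_ℝ (2z+ξ)^{-1} f(ξ) dξ. (In particular the integral on the right converges absolutely.) -/

import Mathlib

open MeasureTheory Complex

/-- The unitary Fourier transform `û(ξ) = (2π)^{-1/2} ∫ u(x) e^{-ixξ} dx`. -/
noncomputable def unitaryFT (u : ℝ → ℂ) (ξ : ℝ) : ℂ :=
  ((Real.sqrt (2 * Real.pi) : ℝ) : ℂ)⁻¹ *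
    ∫ x : ℝ, Complex.exp (-(Complex.I * (x : ℂ) * (ξ : ℂ))) * u x

/-- The quadratic term `T₂(z) = i ∫ (2z+ξ)⁻¹ |û(ξ)|² dξ`. -/
noncomputable def T₂ (u : ℝ → ℂ) (z : ℂ) : ℂ :=
  Complex.I * ∫ ξ : ℝ, (2 * z + (ξ : ℂ))⁻¹ * ((‖unitaryFT u ξ‖ ^ 2 : ℝ) : ℂ)

lemma integrableOn_K {s a : ℝ} (h1 : -1 < s) (h2 : s < 0) (ha : 0 < a) :
    IntegrableOn (fun t : ℝ => t ^ s / (t + a)) (Set.Ioi 0) := by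
  have hmeas : Measurable fun t : ℝ => t ^ s / (t + a) := by fun_prop
  rw [← Set.Ioc_union_Ioi_eq_Ioi (zero_le_one (α := ℝ)), integrableOn_union]
  constructor
  · refine Integrable.mono'
      (((intervalIntegral.intervalIntegrable_rpow' h1 (a := 0) (b := 1)).1).mul_const a⁻¹)
      hmeas.aestronglyMeasurable.restrict ?_
    refine (ae_restrict_iff' measurableSet_Ioc).2 (Filter.Eventually.of_forall fun t ht => ?_)
    have ht0 : (0:ℝ) < t := ht.1
    have : t ^ s / (t + a) ≤ t ^ s / a := by
      gcongr
      linarith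
    rw [Real.norm_eq_abs, _root_.abs_of_nonneg (by positivity)]
    rw [div_eq_mul_inv] at this
    exact this
  · refine Integrable.mono' (integrableOn_Ioi_rpow_of_lt (by linarith : s - 1 < -1) one_pos)
      hmeas.aestronglyMeasurable.restrict ?_
    refine (ae_restrict_iff' measurableSet_Ioi).2 (Filter.Eventually.of_forall fun t ht => ?_)
    have ht1 : (1:ℝ) < t := ht
    have ht0 : (0:ℝ) < t := lt_trans one_pos ht1
    rw [Real.norm_eq_abs, _root_.abs_of_nonneg (by positivity), Real.rpow_sub_one ht0.ne']
    gcongr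
    linarith

lemma K_one {s : ℝ} (h1 : -1 < s) (h2 : s < 0) :
    ∫ t in Set.Ioi (0:ℝ), t ^ s / (t + 1) = Real.pi / Real.sin (Real.pi * (s + 1)) := by
  -- substitution x ↦ x/(1-x) from Ioo 0 1 onto Ioi 0
  have himg : (fun x : ℝ => x / (1 - x)) '' Set.Ioo 0 1 = Set.Ioi 0 := by
    ext t
    constructor
    · rintro ⟨x, ⟨hx0, hx1⟩, rfl⟩
      exact div_pos hx0 (by linarith)
    · intro ht
      have ht0 : (0:ℝ) < t := ht
      refine ⟨t / (1 + t), ⟨by positivity, ?_⟩, ?_⟩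
      · rw [div_lt_one (by positivity)]; linarith
      · field_simp
        ring
  have hderiv : ∀ x ∈ Set.Ioo (0:ℝ) 1, HasDerivWithinAt (fun x : ℝ => x / (1 - x))
      (((1 - x) ^ 2)⁻¹) (Set.Ioo 0 1) x := by
    intro x hx
    have hne : (1 - x) ≠ 0 := by have := hx.2; intro h; linarith [sub_eq_zero.mp h]
    have h := (hasDerivAt_id x).div ((hasDerivAt_const x (1:ℝ)).sub (hasDerivAt_id x)) hne
    have h2 : HasDerivAt (fun x : ℝ => x / (1 - x)) (((1 - x) ^ 2)⁻¹) x := by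
      refine h.congr_deriv ?_
      simp only [Pi.sub_apply, id]
      try field_simp
      try ring
    exact h2.hasDerivWithinAt
  have hinj : Set.InjOn (fun x : ℝ => x / (1 - x)) (Set.Ioo 0 1) := by
    intro a ha b hb hab
    have hna : (1:ℝ) - a ≠ 0 := by have := ha.2; intro h; linarith [sub_eq_zero.mp h]
    have hnb : (1:ℝ) - b ≠ 0 := by have := hb.2; intro h; linarith [sub_eq_zero.mp h]
    field_simp at hab
    nlinarith [hab]
  have hsub := integral_image_eq_integral_abs_deriv_smul measurableSet_Ioo hderiv hinj
      (fun t : ℝ => t ^ s / (t + 1))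
  rw [himg] at hsub
  rw [hsub]
  -- simplify the integrand on Ioo 0 1
  have hcongr : ∫ x in Set.Ioo (0:ℝ) 1,
      |((1 - x) ^ 2)⁻¹| • ((x / (1 - x)) ^ s / (x / (1 - x) + 1))
      = ∫ x in Set.Ioo (0:ℝ) 1, x ^ s * (1 - x) ^ (-s - 1) := by
    refine setIntegral_congr_fun measurableSet_Ioo fun x hx => ?_
    have hx0 : (0:ℝ) < x := hx.1
    have h1x : (0:ℝ) < 1 - x := by have := hx.2; linarith
    have e1 : x / (1 - x) + 1 = (1 - x)⁻¹ := by field_simp; ring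
    rw [e1, smul_eq_mul, _root_.abs_of_nonneg (by positivity),
      Real.div_rpow hx0.le h1x.le]
    have e2 : (1 - x) ^ (-s - 1) = ((1 - x) ^ s)⁻¹ * (1 - x)⁻¹ := by
      rw [show -s - 1 = -s + (-1) by ring, Real.rpow_add h1x, Real.rpow_neg h1x.le,
        Real.rpow_neg_one]
    rw [e2]
    have hps : (1 - x) ^ s ≠ 0 := (Real.rpow_pos_of_pos h1x s).ne'
    field_simp
  rw [hcongr]
  -- identify with the Beta integral
  have hne1 : 0 < ((s:ℂ) + 1).re := by
    simp only [Complex.add_re, Complex.ofReal_re, Complex.one_re]; linarith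
  have hne2 : 0 < (-(s:ℂ)).re := by
    simp only [Complex.neg_re, Complex.ofReal_re]; linarith
  have hbeta := Complex.Gamma_mul_Gamma_eq_betaIntegral hne1 hne2
  have hadd : (s:ℂ) + 1 + -(s:ℂ) = 1 := by ring
  rw [hadd, Complex.Gamma_one, one_mul] at hbeta
  have hrefl := Complex.Gamma_mul_Gamma_one_sub ((s:ℂ) + 1)
  rw [show (1 : ℂ) - ((s:ℂ) + 1) = -(s:ℂ) by ring] at hrefl
  have hbeta2 : Complex.betaIntegral ((s:ℂ) + 1) (-(s:ℂ))
      = ((Real.pi / Real.sin (Real.pi * (s + 1)) : ℝ) : ℂ) := by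
    rw [← hbeta, hrefl]
    push_cast [Complex.ofReal_sin]
    norm_num
  -- compute betaIntegral as a real integral
  have hbeta3 : Complex.betaIntegral ((s:ℂ) + 1) (-(s:ℂ))
      = ((∫ x in Set.Ioo (0:ℝ) 1, x ^ s * (1 - x) ^ (-s - 1) : ℝ) : ℂ) := by
    rw [Complex.betaIntegral]
    have : ∀ x ∈ Set.uIcc (0:ℝ) 1,
        (x:ℂ) ^ ((s:ℂ) + 1 - 1) * (1 - (x:ℂ)) ^ (-(s:ℂ) - 1)
        = ((x ^ s * (1 - x) ^ (-s - 1) : ℝ) : ℂ) := by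
      intro x hx
      rw [Set.uIcc_of_le zero_le_one] at hx
      have hx0 : (0:ℝ) ≤ x := hx.1
      have h1x : (0:ℝ) ≤ 1 - x := by have := hx.2; linarith
      rw [show (s:ℂ) + 1 - 1 = ((s:ℝ):ℂ) by ring,
        show -(s:ℂ) - 1 = ((-s - 1 : ℝ):ℂ) by push_cast; ring,
        show (1 - (x:ℂ)) = (((1 - x : ℝ)):ℂ) by push_cast; ring,
        ← Complex.ofReal_cpow hx0, ← Complex.ofReal_cpow h1x, ← Complex.ofReal_mul]
    rw [intervalIntegral.integral_congr this, intervalIntegral.integral_ofReal]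
    congr 1
    rw [intervalIntegral.integral_of_le zero_le_one, integral_Ioc_eq_integral_Ioo]
  rw [hbeta3] at hbeta2
  exact_mod_cast hbeta2
lemma K_scaled {s a : ℝ} (ha : 0 < a) :
    ∫ t in Set.Ioi (0:ℝ), t ^ s / (t + a)
      = a ^ s * ∫ t in Set.Ioi (0:ℝ), t ^ s / (t + 1) := by
  have h := integral_comp_mul_right_Ioi (fun t : ℝ => t ^ s / (t + 1)) 0 (inv_pos.2 ha)
  simp only [zero_mul, smul_eq_mul, inv_inv] at h
  have hc : ∀ t ∈ Set.Ioi (0:ℝ),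
      t ^ s / (t + a) = a ^ (s - 1) * ((t * a⁻¹) ^ s / (t * a⁻¹ + 1)) := by
    intro t ht
    have ht0 : (0:ℝ) < t := ht
    rw [Real.mul_rpow ht0.le (inv_nonneg.2 ha.le), Real.inv_rpow ha.le,
      Real.rpow_sub_one ha.ne']
    have e : t * a⁻¹ + 1 = (t + a) / a := by field_simp
    rw [e]
    have h1 : a ^ s ≠ 0 := (Real.rpow_pos_of_pos ha s).ne'
    have h2 : t + a ≠ 0 := by positivity
    field_simp
  rw [setIntegral_congr_fun measurableSet_Ioi hc, integral_const_mul, h,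
    ← mul_assoc, ← Real.rpow_add_one ha.ne']
  ring_nf
lemma J_int_and_eq {s : ℝ} (h1 : -1 < s) (h2 : s < 0) (ξ : ℝ) :
    IntegrableOn (fun τ : ℝ => (τ ^ 2 - 1) ^ s * (τ / (ξ ^ 2 + τ ^ 2))) (Set.Ioi 1)
    ∧ ∫ τ in Set.Ioi (1:ℝ), (τ ^ 2 - 1) ^ s * (τ / (ξ ^ 2 + τ ^ 2))
      = (1 + ξ ^ 2) ^ s * (Real.pi / Real.sin (Real.pi * (s + 1))) / 2 := by
  have ha : (0:ℝ) < 1 + ξ ^ 2 := by positivity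
  set g : ℝ → ℝ := fun τ => (τ ^ 2 - 1) ^ s * (τ / (ξ ^ 2 + τ ^ 2)) with hg
  have himg : (fun t : ℝ => Real.sqrt (1 + t)) '' Set.Ioi 0 = Set.Ioi 1 := by
    ext τ
    constructor
    · rintro ⟨t, ht, rfl⟩
      have ht0 : (0:ℝ) < t := ht
      exact (Real.lt_sqrt (by positivity)).2 (by nlinarith)
    · intro hτ
      have hτ1 : (1:ℝ) < τ := hτ
      refine ⟨τ ^ 2 - 1, by simp only [Set.mem_Ioi]; nlinarith, ?_⟩
      show Real.sqrt (1 + (τ ^ 2 - 1)) = τ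
      rw [show 1 + (τ ^ 2 - 1) = τ ^ 2 by ring, Real.sqrt_sq (by linarith)]
  have hderiv : ∀ t ∈ Set.Ioi (0:ℝ), HasDerivWithinAt (fun t : ℝ => Real.sqrt (1 + t))
      (1 / (2 * Real.sqrt (1 + t))) (Set.Ioi 0) t := by
    intro t ht
    have ht0 : (0:ℝ) < t := ht
    have h1t : (0:ℝ) < 1 + t := by linarith
    have h := (Real.hasDerivAt_sqrt h1t.ne').comp t (((hasDerivAt_id t).const_add 1))
    exact (h.congr_deriv (by simp)).hasDerivWithinAt
  have hinj : Set.InjOn (fun t : ℝ => Real.sqrt (1 + t)) (Set.Ioi 0) := by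
    intro a hb b hb' hab
    have ha' : (0:ℝ) < a := hb
    have hb'' : (0:ℝ) < b := hb'
    have := (Real.sqrt_inj (by linarith) (by linarith)).1 hab
    linarith
  have hiff := integrableOn_image_iff_integrableOn_abs_deriv_smul measurableSet_Ioi hderiv hinj g
  have heq := integral_image_eq_integral_abs_deriv_smul measurableSet_Ioi hderiv hinj g
  rw [himg] at hiff heq
  have hcong : ∀ t ∈ Set.Ioi (0:ℝ),
      |1 / (2 * Real.sqrt (1 + t))| • g (Real.sqrt (1 + t))
      = (1 / 2) * (t ^ s / (t + (1 + ξ ^ 2))) := by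
    intro t ht
    have ht0 : (0:ℝ) < t := ht
    have h1t : (0:ℝ) < 1 + t := by linarith
    have hs0 : (0:ℝ) < Real.sqrt (1 + t) := Real.sqrt_pos.2 h1t
    rw [hg, smul_eq_mul, _root_.abs_of_nonneg (by positivity)]
    simp only
    rw [Real.sq_sqrt h1t.le]
    rw [show 1 + t - 1 = t by ring]
    field_simp
    ring
  have hInt2 : IntegrableOn
      (fun t => |1 / (2 * Real.sqrt (1 + t))| • g (Real.sqrt (1 + t))) (Set.Ioi 0) := by
    refine IntegrableOn.congr_fun
      (((integrableOn_K h1 h2 ha).const_mul (1/2 : ℝ)) : IntegrableOn _ _ _) ?_ measurableSet_Ioi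
    intro t ht
    exact (hcong t ht).symm
  refine ⟨hiff.2 hInt2, ?_⟩
  rw [heq, setIntegral_congr_fun measurableSet_Ioi hcong, integral_const_mul,
    K_scaled ha, K_one h1 h2]
  ring

lemma unitaryFT_eq (u : SchwartzMap ℝ ℂ) (ξ : ℝ) :
    unitaryFT (⇑u) ξ = ((Real.sqrt (2 * Real.pi) : ℝ) : ℂ)⁻¹ *
      (FourierTransform.fourierCLE ℝ (SchwartzMap ℝ ℂ) u) (ξ / (2 * Real.pi)) := by
  rw [unitaryFT, FourierTransform.fourierCLE_apply, SchwartzMap.fourier_coe,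
    Real.fourier_real_eq_integral_exp_smul]
  congr 1
  refine integral_congr_ae (Filter.Eventually.of_forall fun x => ?_)
  simp only [smul_eq_mul]
  congr 1
  have : (-2 * Real.pi * x * (ξ / (2 * Real.pi)) : ℝ) = -x * ξ := by
    field_simp
  rw [this]
  congr 1
  push_cast
  ring

lemma continuous_f (u : SchwartzMap ℝ ℂ) :
    Continuous fun ξ : ℝ => ‖unitaryFT (⇑u) ξ‖ ^ 2 := by
  have : Continuous fun ξ : ℝ => unitaryFT (⇑u) ξ := by
    simp only [unitaryFT_eq]
    exact continuous_const.mul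
      ((FourierTransform.fourierCLE ℝ (SchwartzMap ℝ ℂ) u).continuous.comp (continuous_id.div_const _))
  exact (this.norm).pow 2

lemma f_bound (u : SchwartzMap ℝ ℂ) :
    ∃ C : ℝ, 0 < C ∧ ∀ ξ : ℝ, ‖unitaryFT (⇑u) ξ‖ ^ 2 * (1 + ξ ^ 2) ≤ C := by
  set g := FourierTransform.fourierCLE ℝ (SchwartzMap ℝ ℂ) u with hgdef
  obtain ⟨C₀, hC₀pos, hC₀⟩ := g.decay 0 0
  obtain ⟨C₂, hC₂pos, hC₂⟩ := g.decay 2 0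
  have hπ : (0:ℝ) < Real.pi := Real.pi_pos
  refine ⟨2 * Real.pi * (C₀ * (C₀ + C₂)), by positivity, fun ξ => ?_⟩
  set η := ξ / (2 * Real.pi) with hη
  set A := ‖g η‖ with hA
  have hA0 : 0 ≤ A := norm_nonneg _
  have h0 : A ≤ C₀ := by
    have := hC₀ η
    simpa [norm_iteratedFDeriv_zero] using this
  have h2 : η ^ 2 * A ≤ C₂ := by
    have := hC₂ η
    rw [norm_iteratedFDeriv_zero] at this
    simpa [Real.norm_eq_abs, sq_abs] using this
  have h3 : A * (1 + η ^ 2) ≤ C₀ + C₂ := by nlinarith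
  have hsq : ‖unitaryFT (⇑u) ξ‖ ^ 2 = (2 * Real.pi)⁻¹ * A ^ 2 := by
    rw [unitaryFT_eq, ← hgdef, ← hη, norm_mul, mul_pow, ← hA]
    congr 1
    rw [norm_inv, Complex.norm_real, Real.norm_eq_abs,
      _root_.abs_of_nonneg (Real.sqrt_nonneg _), ← Real.sqrt_inv, Real.sq_sqrt (by positivity)]
  have hξη : ξ ^ 2 = (2 * Real.pi) ^ 2 * η ^ 2 := by
    rw [hη]; field_simp
  have hπ1 : (1:ℝ) ≤ (2 * Real.pi) ^ 2 := by nlinarith [Real.pi_gt_three]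
  have hs1 : 1 + ξ ^ 2 ≤ (2 * Real.pi) ^ 2 * (1 + η ^ 2) := by
    rw [hξη]; nlinarith [sq_nonneg η]
  calc ‖unitaryFT (⇑u) ξ‖ ^ 2 * (1 + ξ ^ 2)
      = (2 * Real.pi)⁻¹ * (A ^ 2 * (1 + ξ ^ 2)) := by rw [hsq]; ring
    _ ≤ (2 * Real.pi)⁻¹ * (A ^ 2 * ((2 * Real.pi) ^ 2 * (1 + η ^ 2))) := by
        have := mul_le_mul_of_nonneg_left hs1 (sq_nonneg A)
        exact mul_le_mul_of_nonneg_left this (by positivity)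
    _ = 2 * Real.pi * (A * (A * (1 + η ^ 2))) := by field_simp
    _ ≤ 2 * Real.pi * (A * (C₀ + C₂)) := by
        have := mul_le_mul_of_nonneg_left h3 hA0
        exact mul_le_mul_of_nonneg_left this (by positivity)
    _ ≤ 2 * Real.pi * (C₀ * (C₀ + C₂)) := by
        have := mul_le_mul_of_nonneg_right h0 (by linarith : (0:ℝ) ≤ C₀ + C₂)
        exact mul_le_mul_of_nonneg_left this (by positivity)

lemma integrable_f (u : SchwartzMap ℝ ℂ) :
    Integrable (fun ξ : ℝ => ‖unitaryFT (⇑u) ξ‖ ^ 2) := by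
  obtain ⟨C, hCpos, hC⟩ := f_bound u
  refine Integrable.mono' ((integrable_inv_one_add_sq).const_mul C)
    (continuous_f u).aestronglyMeasurable
    (Filter.Eventually.of_forall fun ξ => ?_)
  rw [Real.norm_eq_abs, _root_.abs_of_nonneg (by positivity)]
  rw [← div_eq_mul_inv, le_div_iff₀ (by positivity : (0:ℝ) < 1 + ξ ^ 2)]
  exact hC ξ

lemma integrable_T2_integrand (u : SchwartzMap ℝ ℂ) {τ : ℝ} (hτ : 0 < τ) :
    Integrable (fun ξ : ℝ =>
      (Complex.I * τ + ξ)⁻¹ * ((‖unitaryFT (⇑u) ξ‖ ^ 2 : ℝ) : ℂ)) := by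
  have hne : ∀ ξ : ℝ, (Complex.I * τ + ξ) ≠ 0 := by
    intro ξ h
    have := congrArg Complex.im h
    simp at this
    exact hτ.ne' this
  refine Integrable.mono' ((integrable_f u).const_mul τ⁻¹)
    ?_ (Filter.Eventually.of_forall fun ξ => ?_)
  · refine Continuous.aestronglyMeasurable ?_
    exact ((continuous_const.add Complex.continuous_ofReal).inv₀ hne).mul
      ((Complex.continuous_ofReal.comp (continuous_f u)))
  · rw [norm_mul, norm_inv, Complex.norm_real, Real.norm_eq_abs,
      _root_.abs_of_nonneg (by positivity)]
    have habs : τ ≤ ‖Complex.I * τ + ξ‖ := by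
      have := Complex.abs_im_le_norm (Complex.I * τ + ξ)
      simpa [_root_.abs_of_nonneg hτ.le] using this
    have : ‖Complex.I * (τ:ℂ) + (ξ:ℂ)‖⁻¹ ≤ τ⁻¹ := by
      exact inv_anti₀ hτ habs
    exact mul_le_mul_of_nonneg_right this (by positivity)

lemma reT2 (u : SchwartzMap ℝ ℂ) {τ : ℝ} (hτ : 0 < τ) :
    (T₂ (⇑u) (Complex.I * (τ:ℂ) / 2)).re
      = ∫ ξ : ℝ, τ / (ξ ^ 2 + τ ^ 2) * ‖unitaryFT (⇑u) ξ‖ ^ 2 := by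
  rw [T₂]
  have h2z : 2 * (Complex.I * (τ:ℂ) / 2) = Complex.I * τ := by ring
  simp only [h2z]
  have hre : ∀ w : ℂ, (Complex.I * w).re = -w.im := by
    intro w; simp [Complex.mul_re]
  have him := integral_im (integrable_T2_integrand u hτ)
  simp only [RCLike.im_eq_complex_im] at him
  rw [hre, ← him, ← integral_neg]
  refine integral_congr_ae (Filter.Eventually.of_forall fun ξ => ?_)
  have hns : Complex.normSq (Complex.I * τ + ξ) = ξ ^ 2 + τ ^ 2 := by
    simp [Complex.normSq_apply]
    ring
  simp only [Complex.mul_im, Complex.inv_im, Complex.inv_re, hns,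
    Complex.ofReal_re, Complex.ofReal_im]
  try simp
  try field_simp
  try ring

/-- For `−1/2 < s < 0` and `u` Schwartz, the integral
`∫₁^∞ (τ²−1)^s Re T₂(iτ/2) dτ` converges absolutely and
`‖u‖²_{H^s} = −(2 sin(πs)/π) ∫₁^∞ (τ²−1)^s Re T₂(iτ/2) dτ`, where
`‖u‖²_{H^s} = ∫ (1+ξ²)^s |û(ξ)|² dξ`. -/
theorem stmt_3 (u : SchwartzMap ℝ ℂ) (s : ℝ) (hs₁ : -(1 / 2 : ℝ) < s) (hs₂ : s < 0) :
    IntegrableOn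
        (fun τ : ℝ => (τ ^ 2 - 1) ^ s * (T₂ (⇑u) (Complex.I * (τ : ℂ) / 2)).re)
        (Set.Ioi (1 : ℝ)) ∧
      (∫ ξ : ℝ, (1 + ξ ^ 2) ^ s * ‖unitaryFT (⇑u) ξ‖ ^ 2)
        = -(2 * Real.sin (Real.pi * s) / Real.pi) *
            ∫ τ in Set.Ioi (1 : ℝ),
              (τ ^ 2 - 1) ^ s * (T₂ (⇑u) (Complex.I * (τ : ℂ) / 2)).re := by
  have h1 : (-1 : ℝ) < s := by linarith
  set f : ℝ → ℝ := fun ξ => ‖unitaryFT (⇑u) ξ‖ ^ 2 with hfdef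
  have hf0 : ∀ ξ, 0 ≤ f ξ := fun ξ => by positivity
  have hfInt : Integrable f := integrable_f u
  have hfm : Measurable f := (continuous_f u).measurable
  have hπ : (0:ℝ) < Real.pi := Real.pi_pos
  have hsin : Real.sin (Real.pi * (s + 1)) = -Real.sin (Real.pi * s) := by
    rw [show Real.pi * (s + 1) = Real.pi * s + Real.pi by ring, Real.sin_add_pi]
  have hsinneg : Real.sin (Real.pi * s) < 0 := by
    apply Real.sin_neg_of_neg_of_neg_pi_lt
    · nlinarith
    · nlinarith
  set Kc : ℝ := Real.pi / Real.sin (Real.pi * (s + 1)) with hKc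
  set F : ℝ → ℝ → ℝ := fun τ ξ => (τ ^ 2 - 1) ^ s * (τ / (ξ ^ 2 + τ ^ 2)) * f ξ with hF
  have hJ := fun ξ : ℝ => J_int_and_eq h1 hs₂ ξ
  have hτint : ∀ ξ : ℝ, Integrable (fun τ => F τ ξ) (volume.restrict (Set.Ioi 1)) :=
    fun ξ => (hJ ξ).1.mul_const (f ξ)
  have hFnonneg : ∀ ξ : ℝ, ∀ τ ∈ Set.Ioi (1:ℝ), 0 ≤ F τ ξ := by
    intro ξ τ hτ
    have h2 : (1:ℝ) < τ := hτ
    have h3 : 0 ≤ (τ ^ 2 - 1) ^ s := Real.rpow_nonneg (by nlinarith) _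
    have h4 : 0 ≤ τ / (ξ ^ 2 + τ ^ 2) := by positivity
    exact mul_nonneg (mul_nonneg h3 h4) (hf0 ξ)
  have hτvalue : ∀ ξ : ℝ, ∫ τ in Set.Ioi (1:ℝ), F τ ξ = ((1 + ξ ^ 2) ^ s * Kc / 2) * f ξ := by
    intro ξ
    rw [hF]
    rw [MeasureTheory.integral_mul_const, (hJ ξ).2]
    try ring
  have hnormint : ∀ ξ : ℝ, ∫ τ in Set.Ioi (1:ℝ), ‖F τ ξ‖ = ((1 + ξ ^ 2) ^ s * Kc / 2) * f ξ := by
    intro ξ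
    rw [← hτvalue ξ]
    refine setIntegral_congr_fun measurableSet_Ioi fun τ hτ => ?_
    rw [Real.norm_eq_abs, _root_.abs_of_nonneg (hFnonneg ξ τ hτ)]
  have hmarg : Integrable (fun ξ => ((1 + ξ ^ 2) ^ s * Kc / 2) * f ξ) := by
    refine Integrable.mono' (hfInt.const_mul (|Kc| / 2 + 1))
      (((by fun_prop : Measurable fun ξ : ℝ => (1 + ξ ^ 2) ^ s * Kc / 2).mul hfm).aestronglyMeasurable)
      (Filter.Eventually.of_forall fun ξ => ?_)
    have hle : (1 + ξ ^ 2) ^ s ≤ 1 :=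
      Real.rpow_le_one_of_one_le_of_nonpos (by nlinarith [sq_nonneg ξ]) hs₂.le
    have h0' : 0 ≤ (1 + ξ ^ 2) ^ s := Real.rpow_nonneg (by positivity) _
    rw [Real.norm_eq_abs, abs_mul, abs_div, abs_mul, _root_.abs_of_nonneg h0',
      _root_.abs_of_nonneg (hf0 ξ)]
    have hKabs : 0 ≤ |Kc| := abs_nonneg _
    have : (1 + ξ ^ 2) ^ s * |Kc| / |(2:ℝ)| ≤ |Kc| / 2 + 1 := by
      rw [_root_.abs_two]
      nlinarith
    nlinarith [hf0 ξ, mul_le_mul_of_nonneg_right this (hf0 ξ)]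
  have hFmeas : AEStronglyMeasurable (Function.uncurry F)
      ((volume.restrict (Set.Ioi 1)).prod volume) := by
    have hm : Measurable (Function.uncurry F) := by
      have h1m : Measurable fun p : ℝ × ℝ => (p.1 ^ 2 - 1) ^ s * (p.1 / (p.2 ^ 2 + p.1 ^ 2)) := by
        fun_prop
      exact h1m.mul (hfm.comp measurable_snd)
    exact hm.aestronglyMeasurable
  have hprod : Integrable (Function.uncurry F)
      ((volume.restrict (Set.Ioi 1)).prod volume) := by
    refine (integrable_prod_iff' hFmeas).2 ⟨Filter.Eventually.of_forall fun ξ => hτint ξ, ?_⟩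
    refine hmarg.congr (Filter.Eventually.of_forall fun ξ => ?_)
    simpa [Function.uncurry] using (hnormint ξ).symm
  have hinner : ∀ τ : ℝ, τ ∈ Set.Ioi (1:ℝ) →
      (τ ^ 2 - 1) ^ s * (T₂ (⇑u) (Complex.I * (τ : ℂ) / 2)).re = ∫ ξ : ℝ, F τ ξ := by
    intro τ hτ
    have hτ1 : (1:ℝ) < τ := hτ
    rw [reT2 u (by linarith : (0:ℝ) < τ), ← MeasureTheory.integral_const_mul]
    refine integral_congr_ae (Filter.Eventually.of_forall fun ξ => ?_)
    rw [hF]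
    ring
  have hIntegral1 : Integrable (fun τ => ∫ ξ : ℝ, F τ ξ) (volume.restrict (Set.Ioi 1)) := by
    have := hprod.integral_prod_left
    simpa [Function.uncurry] using this
  constructor
  · refine hIntegral1.congr ?_
    refine (ae_restrict_iff' measurableSet_Ioi).2
      (Filter.Eventually.of_forall fun τ hτ => ?_)
    exact (hinner τ hτ).symm
  · have hswap := integral_integral_swap (f := F) (by
      simpa [Function.uncurry] using hprod)
    rw [setIntegral_congr_fun measurableSet_Ioi hinner, hswap]
    have : ∫ ξ : ℝ, ∫ τ in Set.Ioi (1:ℝ), F τ ξ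
        = (Kc / 2) * ∫ ξ : ℝ, (1 + ξ ^ 2) ^ s * f ξ := by
      rw [← MeasureTheory.integral_const_mul]
      refine integral_congr_ae (Filter.Eventually.of_forall fun ξ => ?_)
      show (∫ τ in Set.Ioi (1:ℝ), F τ ξ) = Kc / 2 * ((1 + ξ ^ 2) ^ s * f ξ)
      rw [hτvalue ξ]
      ring
    have hs0 : Real.sin (Real.pi * s) ≠ 0 := hsinneg.ne
    have hconst : -(2 * Real.sin (Real.pi * s) / Real.pi) * (Kc / 2) = 1 := by
      rw [hKc, hsin]
      field_simp
    rw [this, ← mul_assoc, hconst, one_mul]
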